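/- Let k ≥ 4 and let r satisfy k < r ≤ 2k-3. Then for every n > r there exists a primitive uniquely K_r^(k)-saturated hypergraph on n vertices. -/

import Mathlib

open Finset

/-- The edge set `E` is `k`-uniform. -/
def Uniform (n k : ℕ) (E : Finset (Finset (Fin n))) : Prop :=
  ∀ e ∈ E, e.card = k

/-- `H` contains a copy of the complete `k`-uniform hypergraph on `r` vertices. -/
def HasClique (n k r : ℕ) (E : Finset (Finset (Fin n))) : Prop :=
  ∃ Q : Finset (Fin n), Q.card = r ∧ ∀ T ⊆ Q, T.card = k → T ∈ E

/-- `H` is uniquely `K_r^(k)`-saturated: it has no `K_r^(k)`, and adding any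
non-edge `k`-set `S` creates exactly one copy of `K_r^(k)`. -/
def UniquelySat (n k r : ℕ) (E : Finset (Finset (Fin n))) : Prop :=
  ¬ HasClique n k r E ∧
  ∀ S : Finset (Fin n), S.card = k → S ∉ E →
    ∃! Q : Finset (Fin n), Q.card = r ∧ ∀ T ⊆ Q, T.card = k → (T ∈ E ∨ T = S)

/-- `H` has no dominating vertex. -/
def Primitive (n k : ℕ) (E : Finset (Finset (Fin n))) : Prop :=
  ¬ ∃ v : Fin n, ∀ S : Finset (Fin n), S.card = k → v ∈ S → S ∈ E

/-- `H` is a primitive uniquely `K_r^(k)`-saturated `k`-uniform hypergraph. -/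
def IsPUS (n k r : ℕ) (E : Finset (Finset (Fin n))) : Prop :=
  Uniform n k E ∧ UniquelySat n k r E ∧ Primitive n k E

namespace PUS

/-- The set of vertices of `Fin n` with value in `[a, b)`. -/
def bSet (n a b : ℕ) : Finset (Fin n) := univ.filter (fun v => a ≤ v.val ∧ v.val < b)

lemma mem_bSet {n a b : ℕ} {v : Fin n} : v ∈ bSet n a b ↔ a ≤ v.val ∧ v.val < b := by
  simp [bSet]

lemma card_bSet {n a b : ℕ} (h : b ≤ n) : (bSet n a b).card = b - a := by
  classical
  have key : bSet n a b =
      (Finset.Ico a b).attachFin (fun m hm => lt_of_lt_of_le (Finset.mem_Ico.mp hm).2 h) := by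
    ext v
    simp [bSet, Finset.mem_attachFin, Finset.mem_Ico]
  rw [key, Finset.card_attachFin, Nat.card_Ico]

/-- The non-edge predicate: either a `basic` non-edge (disjoint from `C = [0,t)` and
missing some vertex of `P = [t,c)`), or an `extra` non-edge `insert x PC` where
`PC = [0,c)` and `x` has value at least `c + t`. -/
def IsNE (n t c : ℕ) (T : Finset (Fin n)) : Prop :=
  ((∀ v ∈ T, t ≤ v.val) ∧ ∃ p : Fin n, t ≤ p.val ∧ p.val < c ∧ p ∉ T)
  ∨ (∃ x : Fin n, c + t ≤ x.val ∧ T = insert x (bSet n 0 c))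

open Classical in
/-- The edge set: all `(c+1)`-sets which are not non-edges. -/
noncomputable def myE (n t c : ℕ) : Finset (Finset (Fin n)) :=
  (Finset.powersetCard (c + 1) (univ : Finset (Fin n))).filter (fun T => ¬ IsNE n t c T)

lemma mem_myE {n t c : ℕ} {T : Finset (Fin n)} :
    T ∈ myE n t c ↔ T.card = c + 1 ∧ ¬ IsNE n t c T := by
  classical
  simp [myE, Finset.mem_filter, Finset.mem_powersetCard]

lemma exists_subset_card_mem {α : Type*} [DecidableEq α] {A : Finset α} {a : α} {k : ℕ}
    (ha : a ∈ A) (hk : k + 1 ≤ A.card) : ∃ T ⊆ A, T.card = k + 1 ∧ a ∈ T := by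
  obtain ⟨T', hT'sub, hT'card⟩ := Finset.exists_subset_card_eq (s := A.erase a) (n := k) (by
    rw [Finset.card_erase_of_mem ha]; omega)
  refine ⟨insert a T', ?_, ?_, Finset.mem_insert_self _ _⟩
  · intro x hx
    rcases Finset.mem_insert.mp hx with rfl | hx
    · exact ha
    · exact (Finset.erase_subset _ _) (hT'sub hx)
  · rw [Finset.card_insert_of_notMem (fun h => (Finset.mem_erase.mp (hT'sub h)).1 rfl), hT'card]

/-- Key lemma: any set `A` strictly larger than a `(c+1)`-set `S` contains another
`(c+1)`-set `T ≠ S` missing some vertex `q` with `t ≤ q.val < c`. -/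
lemma second_nonedge {n t c : ℕ} (htc : t + 2 ≤ c) (hn : c + t + 2 ≤ n)
    {S A : Finset (Fin n)} (hSA : S ⊆ A) (hS : S.card = c + 1) (hA : c + 2 ≤ A.card) :
    ∃ T ⊆ A, T.card = c + 1 ∧ T ≠ S ∧ ∃ q : Fin n, t ≤ q.val ∧ q.val < c ∧ q ∉ T := by
  have hss : S ⊂ A := Finset.ssubset_iff_subset_ne.mpr ⟨hSA, fun h => by rw [h] at hS; omega⟩
  obtain ⟨a, haA, haS⟩ := Finset.exists_of_ssubset hss
  have htn : t < n := by omega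
  have ht1n : t + 1 < n := by omega
  obtain ⟨q, hq1, hq2, hqa⟩ : ∃ q : Fin n, t ≤ q.val ∧ q.val < c ∧ q ≠ a := by
    by_cases h : a.val = t
    · exact ⟨⟨t + 1, ht1n⟩, by simp, by simp; omega, fun hc => by
        have : t + 1 = a.val := congrArg Fin.val hc
        omega⟩
    · exact ⟨⟨t, htn⟩, by simp, by simp; omega, fun hc => by
        have : t = a.val := congrArg Fin.val hc
        exact h this.symm⟩
  have haq : a ∈ A.erase q := Finset.mem_erase.mpr ⟨Ne.symm hqa, haA⟩
  have hcard : c + 1 ≤ (A.erase q).card := by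
    have := Finset.pred_card_le_card_erase (s := A) (a := q)
    omega
  obtain ⟨T, hTsub, hTcard, haT⟩ := exists_subset_card_mem haq hcard
  refine ⟨T, fun x hx => (Finset.erase_subset _ _) (hTsub hx), hTcard, ?_, q, hq1, hq2,
    fun h => (Finset.mem_erase.mp (hTsub h)).1 rfl⟩
  intro h
  exact haS (h ▸ haT)

/-- Every `r`-set contains a non-edge. -/
lemma noClique {n t c : ℕ} (htc : t + 2 ≤ c) (hn : c + t + 2 ≤ n)
    {Q : Finset (Fin n)} (hQ : Q.card = c + t + 1) :
    ∃ T ⊆ Q, T.card = c + 1 ∧ IsNE n t c T := by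
  classical
  set A := Q.filter (fun v => t ≤ v.val) with hAdef
  have hsplit : A.card + (Q.filter (fun v => ¬ t ≤ v.val)).card = c + t + 1 := by
    rw [hAdef, Finset.card_filter_add_card_filter_not, hQ]
  have hlow : (Q.filter (fun v => ¬ t ≤ v.val)) ⊆ bSet n 0 t := by
    intro v hv
    rw [mem_bSet]
    have := (Finset.mem_filter.mp hv).2
    omega
  have hlowcard : (Q.filter (fun v => ¬ t ≤ v.val)).card ≤ t := by
    have h1 := Finset.card_le_card hlow
    rw [card_bSet (by omega)] at h1
    omega
  have hAcard : c + 1 ≤ A.card := by omega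
  have hAQ : A ⊆ Q := Finset.filter_subset _ _
  have hAval : ∀ v ∈ A, t ≤ v.val := fun v hv => (Finset.mem_filter.mp hv).2
  by_cases hbig : c + 2 ≤ A.card
  · have htn : t < n := by omega
    set q : Fin n := ⟨t, htn⟩ with hqdef
    have hqval : q.val = t := rfl
    have hE : c + 1 ≤ (A.erase q).card := by
      have := Finset.pred_card_le_card_erase (s := A) (a := q)
      omega
    obtain ⟨T, hTsub, hTcard⟩ := Finset.exists_subset_card_eq (s := A.erase q) (n := c + 1) hE
    refine ⟨T, fun x hx => hAQ ((Finset.erase_subset _ _) (hTsub hx)), hTcard,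
      Or.inl ⟨fun v hv => hAval v ((Finset.erase_subset _ _) (hTsub hv)),
        q, by omega, by omega, fun h => (Finset.mem_erase.mp (hTsub h)).1 rfl⟩⟩
  · have hAc : A.card = c + 1 := by omega
    by_cases hPA : ∃ p : Fin n, t ≤ p.val ∧ p.val < c ∧ p ∉ A
    · obtain ⟨p, h1, h2, h3⟩ := hPA
      exact ⟨A, hAQ, hAc, Or.inl ⟨hAval, p, h1, h2, h3⟩⟩
    · push_neg at hPA
      have hPsub : bSet n t c ⊆ A := fun p hp => by
        rw [mem_bSet] at hp
        exact hPA p hp.1 hp.2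
      have hD : (A \ bSet n t c).card = t + 1 := by
        rw [Finset.card_sdiff_of_subset hPsub, hAc, card_bSet (by omega)]
        omega
      have hnsub : ¬ (A \ bSet n t c ⊆ bSet n c (c + t)) := by
        intro h
        have h1 := Finset.card_le_card h
        rw [hD, card_bSet (by omega)] at h1
        omega
      obtain ⟨x, hxD, hxZ⟩ := Finset.not_subset.mp hnsub
      have hxA : x ∈ A := (Finset.mem_sdiff.mp hxD).1
      have hxval : c + t ≤ x.val := by
        have h1 := hAval x hxA
        have h2 := (Finset.mem_sdiff.mp hxD).2
        rw [mem_bSet] at h2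
        rw [mem_bSet] at hxZ
        omega
      have hlowQ : bSet n 0 t ⊆ Q := by
        have hcard2 : t ≤ (Q.filter (fun v => ¬ t ≤ v.val)).card := by omega
        have heq := Finset.eq_of_subset_of_card_le hlow (by
          rw [card_bSet (by omega)]; omega)
        rw [← heq]
        exact Finset.filter_subset _ _
      refine ⟨insert x (bSet n 0 c), ?_, ?_, Or.inr ⟨x, hxval, rfl⟩⟩
      · intro v hv
        rcases Finset.mem_insert.mp hv with rfl | hv
        · exact hAQ hxA
        · rw [mem_bSet] at hv
          by_cases hvt : v.val < t
          · exact hlowQ (mem_bSet.mpr ⟨by omega, hvt⟩)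
          · exact hAQ (hPA v (by omega) hv.2)
      · rw [Finset.card_insert_of_notMem (fun h => by
          have := (mem_bSet.mp h).2; omega), card_bSet (by omega)]
        omega

/-- The main structural result: `myE n t c` is a primitive uniquely saturated hypergraph. -/
lemma isPUS_myE {n t c : ℕ} (ht : 1 ≤ t) (htc : t + 2 ≤ c) (hn : c + t + 2 ≤ n) :
    IsPUS n (c + 1) (c + t + 1) (myE n t c) := by
  classical
  have hNoClique : ¬ HasClique n (c + 1) (c + t + 1) (myE n t c) := by
    rintro ⟨Q, hQc, hQall⟩
    obtain ⟨T, h1, h2, h3⟩ := noClique htc hn hQc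
    exact (mem_myE.mp (hQall T h1 h2)).2 h3
  refine ⟨fun e he => (mem_myE.mp he).1, ⟨hNoClique, ?_⟩, ?_⟩
  · -- unique saturation
    intro S hScard hSE
    have hSNE : IsNE n t c S := by
      by_contra h
      exact hSE (mem_myE.mpr ⟨hScard, h⟩)
    have key : ∀ Q : Finset (Fin n), Q.card = c + t + 1 →
        (∀ T ⊆ Q, T.card = c + 1 → (T ∈ myE n t c ∨ T = S)) → S ⊆ Q := by
      intro Q h1 h2
      obtain ⟨T, hT1, hT2, hT3⟩ := noClique htc hn h1
      rcases h2 T hT1 hT2 with hE | rfl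
      · exact ((mem_myE.mp hE).2 hT3).elim
      · exact hT1
    rcases hSNE with ⟨hSval, p₀, hp₀1, hp₀2, hp₀S⟩ | ⟨x, hx, rfl⟩
    · -- S is a basic non-edge; unique completion is S ∪ [0, t)
      have hdisj : ∀ v ∈ bSet n 0 t, v ∉ S := by
        intro v hv hvS
        have h1 := (mem_bSet.mp hv).2
        have h2 := hSval v hvS
        omega
      have hQ₀card : (S ∪ bSet n 0 t).card = c + t + 1 := by
        rw [Finset.card_union_of_disjoint (Finset.disjoint_right.mpr hdisj), hScard,
          card_bSet (by omega)]
        omega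
      refine ⟨S ∪ bSet n 0 t, ⟨hQ₀card, ?_⟩, ?_⟩
      · intro T hTsub hTcard
        by_contra hcon
        push_neg at hcon
        have hTNE : IsNE n t c T := by
          by_contra h
          exact hcon.1 (mem_myE.mpr ⟨hTcard, h⟩)
        rcases hTNE with ⟨hTval, _⟩ | ⟨y, hy, rfl⟩
        · have hTS : T ⊆ S := by
            intro v hv
            rcases Finset.mem_union.mp (hTsub hv) with h | h
            · exact h
            · have h1 := (mem_bSet.mp h).2
              have h2 := hTval v hv
              omega
          exact hcon.2 (Finset.eq_of_subset_of_card_le hTS (by omega))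
        · have hp₀T : p₀ ∈ insert y (bSet n 0 c) :=
            Finset.mem_insert.mpr (Or.inr (mem_bSet.mpr ⟨Nat.zero_le _, hp₀2⟩))
          rcases Finset.mem_union.mp (hTsub hp₀T) with h | h
          · exact hp₀S h
          · have := (mem_bSet.mp h).2
            omega
      · rintro Q ⟨hQcard, hQprop⟩
        have hSQ := key Q hQcard hQprop
        have hXcard : (Q \ S).card = t := by
          rw [Finset.card_sdiff_of_subset hSQ, hQcard, hScard]
          omega
        have hXsub : Q \ S ⊆ bSet n 0 t := by
          intro x hxX
          rw [mem_bSet]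
          refine ⟨Nat.zero_le _, ?_⟩
          by_contra hxval
          push_neg at hxval
          obtain ⟨hxQ, hxS⟩ := Finset.mem_sdiff.mp hxX
          set A := Q.filter (fun v => t ≤ v.val) with hAdef
          have hSA : S ⊆ A := fun v hv => Finset.mem_filter.mpr ⟨hSQ hv, hSval v hv⟩
          have hxA : x ∈ A := Finset.mem_filter.mpr ⟨hxQ, hxval⟩
          have hAcard : c + 2 ≤ A.card := by
            have hins : insert x S ⊆ A := Finset.insert_subset hxA hSA
            have h2 := Finset.card_le_card hins
            rw [Finset.card_insert_of_notMem hxS, hScard] at h2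
            omega
          obtain ⟨T, hTA, hTc, hTS, q, hq1, hq2, hq3⟩ :=
            second_nonedge htc hn hSA hScard hAcard
          have hTQ : T ⊆ Q := hTA.trans (Finset.filter_subset _ _)
          rcases hQprop T hTQ hTc with hE | h
          · exact (mem_myE.mp hE).2
              (Or.inl ⟨fun v hv => (Finset.mem_filter.mp (hTA hv)).2, q, hq1, hq2, hq3⟩)
          · exact hTS h
        have hXeq : Q \ S = bSet n 0 t :=
          Finset.eq_of_subset_of_card_le hXsub (by rw [hXcard, card_bSet (by omega)]; omega)
        rw [← Finset.union_sdiff_of_subset hSQ, hXeq]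
    · -- S is an extra non-edge `insert x PC`; unique completion adds `Z = [c, c+t)`
      set S := insert x (bSet n 0 c) with hSdef
      have hxPC : x ∉ bSet n 0 c := fun h => by
        have := (mem_bSet.mp h).2
        omega
      have hPCS : bSet n 0 c ⊆ S := Finset.subset_insert _ _
      have hdisj : ∀ v ∈ bSet n c (c + t), v ∉ S := by
        intro v hv hvS
        have h1 := mem_bSet.mp hv
        rcases Finset.mem_insert.mp hvS with rfl | h
        · omega
        · have := (mem_bSet.mp h).2
          omega
      have hQ₀card : (S ∪ bSet n c (c + t)).card = c + t + 1 := by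
        rw [Finset.card_union_of_disjoint (Finset.disjoint_right.mpr hdisj), hScard,
          card_bSet (by omega)]
        omega
      refine ⟨S ∪ bSet n c (c + t), ⟨hQ₀card, ?_⟩, ?_⟩
      · intro T hTsub hTcard
        by_contra hcon
        push_neg at hcon
        have hTNE : IsNE n t c T := by
          by_contra h
          exact hcon.1 (mem_myE.mpr ⟨hTcard, h⟩)
        rcases hTNE with ⟨hTval, p, hp1, hp2, hpT⟩ | ⟨y, hy, rfl⟩
        · -- basic non-edge inside Q₀ is impossible
          set R := insert x (bSet n t c ∪ bSet n c (c + t)) with hRdef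
          have hTR : T ⊆ R := by
            intro v hv
            have hvval := hTval v hv
            rcases Finset.mem_union.mp (hTsub hv) with h | h
            · rcases Finset.mem_insert.mp h with rfl | h
              · exact Finset.mem_insert_self _ _
              · refine Finset.mem_insert.mpr (Or.inr (Finset.mem_union_left _ ?_))
                rw [mem_bSet] at h ⊢
                omega
            · exact Finset.mem_insert.mpr (Or.inr (Finset.mem_union_right _ h))
          have hRcard : R.card ≤ c + 1 := by
            calc R.card ≤ (bSet n t c ∪ bSet n c (c + t)).card + 1 :=
                  Finset.card_insert_le _ _
            _ ≤ (bSet n t c).card + (bSet n c (c + t)).card + 1 := by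
                  have := Finset.card_union_le (bSet n t c) (bSet n c (c + t))
                  omega
            _ ≤ c + 1 := by
                  rw [card_bSet (by omega), card_bSet (by omega)]
                  omega
          have hTReq : T = R := Finset.eq_of_subset_of_card_le hTR (by omega)
          have hpR : p ∈ R := Finset.mem_insert.mpr
            (Or.inr (Finset.mem_union_left _ (mem_bSet.mpr ⟨hp1, hp2⟩)))
          rw [hTReq] at hpT
          exact hpT hpR
        · -- another extra non-edge inside Q₀ must be S itself
          have hyT : y ∈ insert y (bSet n 0 c) := Finset.mem_insert_self _ _
          have hyQ := hTsub hyT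
          rcases Finset.mem_union.mp hyQ with h | h
          · rcases Finset.mem_insert.mp h with rfl | h
            · exact hcon.2 rfl
            · have := (mem_bSet.mp h).2
              omega
          · have := (mem_bSet.mp h).2
            omega
      · rintro Q ⟨hQcard, hQprop⟩
        have hSQ := key Q hQcard hQprop
        have hXcard : (Q \ S).card = t := by
          rw [Finset.card_sdiff_of_subset hSQ, hQcard, hScard]
          omega
        have hXsub : Q \ S ⊆ bSet n c (c + t) := by
          intro y hyX
          obtain ⟨hyQ, hyS⟩ := Finset.mem_sdiff.mp hyX
          have hyc : c ≤ y.val := by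
            by_contra h
            push_neg at h
            exact hyS (hPCS (mem_bSet.mpr ⟨Nat.zero_le _, h⟩))
          rw [mem_bSet]
          refine ⟨hyc, ?_⟩
          by_contra hyct
          push_neg at hyct
          have hTQ : insert y (bSet n 0 c) ⊆ Q :=
            Finset.insert_subset hyQ (hPCS.trans hSQ)
          have hTcard : (insert y (bSet n 0 c)).card = c + 1 := by
            rw [Finset.card_insert_of_notMem (fun h => by
              have := (mem_bSet.mp h).2; omega), card_bSet (by omega)]
            omega
          rcases hQprop _ hTQ hTcard with hE | h
          · exact (mem_myE.mp hE).2 (Or.inr ⟨y, hyct, rfl⟩)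
          · exact hyS (h ▸ Finset.mem_insert_self y (bSet n 0 c))
        have hXeq : Q \ S = bSet n c (c + t) :=
          Finset.eq_of_subset_of_card_le hXsub (by rw [hXcard, card_bSet (by omega)]; omega)
        rw [← Finset.union_sdiff_of_subset hSQ, hXeq]
  · -- primitivity
    rintro ⟨v, hv⟩
    by_cases hvt : v.val < t
    · -- v ∈ C: use an extra non-edge
      have hxn : c + t < n := by omega
      set x : Fin n := ⟨c + t, hxn⟩ with hxdef
      have hxval : x.val = c + t := rfl
      have hxPC : x ∉ bSet n 0 c := fun h => by
        have := (mem_bSet.mp h).2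
        omega
      have hScard : (insert x (bSet n 0 c)).card = c + 1 := by
        rw [Finset.card_insert_of_notMem hxPC, card_bSet (by omega)]
        omega
      have hvS : v ∈ insert x (bSet n 0 c) :=
        Finset.mem_insert.mpr (Or.inr (mem_bSet.mpr ⟨Nat.zero_le _, by omega⟩))
      have hSE := hv _ hScard hvS
      exact (mem_myE.mp hSE).2 (Or.inr ⟨x, by omega, rfl⟩)
    · -- v ∉ C: use a basic non-edge avoiding a vertex of P
      push_neg at hvt
      have htn : t < n := by omega
      have ht1n : t + 1 < n := by omega
      obtain ⟨q, hq1, hq2, hqv⟩ : ∃ q : Fin n, t ≤ q.val ∧ q.val < c ∧ q ≠ v := by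
        by_cases h : v.val = t
        · exact ⟨⟨t + 1, ht1n⟩, by simp, by simp; omega, fun hc => by
            have : t + 1 = v.val := congrArg Fin.val hc
            omega⟩
        · exact ⟨⟨t, htn⟩, by simp, by simp; omega, fun hc => by
            have : t = v.val := congrArg Fin.val hc
            exact h this.symm⟩
      have hvA : v ∈ (bSet n t n).erase q :=
        Finset.mem_erase.mpr ⟨Ne.symm hqv, mem_bSet.mpr ⟨hvt, v.isLt⟩⟩
      have hAcard : c + 1 ≤ ((bSet n t n).erase q).card := by
        have h1 := Finset.pred_card_le_card_erase (s := bSet n t n) (a := q)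
        rw [card_bSet (le_refl n)] at h1
        omega
      obtain ⟨T, hTsub, hTcard, hvT⟩ := exists_subset_card_mem hvA hAcard
      have hSE := hv T hTcard hvT
      refine (mem_myE.mp hSE).2 (Or.inl ⟨?_, q, hq1, hq2,
        fun h => (Finset.mem_erase.mp (hTsub h)).1 rfl⟩)
      intro u hu
      exact (mem_bSet.mp ((Finset.erase_subset _ _) (hTsub hu))).1

end PUS

theorem stmt5 (k r : ℕ) (hk : 4 ≤ k) (hkr : k < r) (hr : r ≤ 2 * k - 3) :
    ∀ n : ℕ, r < n → ∃ E : Finset (Finset (Fin n)), IsPUS n k r E := by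
  intro n hn
  obtain ⟨c, rfl⟩ : ∃ c, k = c + 1 := ⟨k - 1, by omega⟩
  obtain ⟨t, rfl⟩ : ∃ t, r = c + t + 1 := ⟨r - c - 1, by omega⟩
  exact ⟨PUS.myE n t c, PUS.isPUS_myE (by omega) (by omega) (by omega)⟩
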